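/- Let m ≥ 1 and n ≥ 1 be integers. Then −m · (Γ(mn)/(Γ(n)·Γ(n(m−1)))) · ∫₀¹ x^n (1−x)^(n(m−1)−1) ln x dx = H_{mn} − H_n, where H_k denotes the k-th harmonic number. -/

import Mathlib

open MeasureTheory Real

lemma my_integrableOn_log_Ioo : IntegrableOn Real.log (Set.Ioo (0:ℝ) 1) := by
  have h : IntegrableOn (fun x : ℝ => -Real.log x) (Set.Ioc (0:ℝ) 1) := by
    apply intervalIntegral.integrableOn_deriv_of_nonneg (g := fun x : ℝ => x - x * Real.log x)
    · exact (continuous_id.sub Real.continuous_mul_log).continuousOn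
    · intro x hx
      have hx0 : x ≠ 0 := ne_of_gt hx.1
      have := (hasDerivAt_id x).sub (Real.hasDerivAt_mul_log hx0)
      exact this.congr_deriv (by ring)
    · intro x hx
      simp only [neg_nonneg]
      exact Real.log_nonpos hx.1.le hx.2.le
  have h2 := h.mono_set Set.Ioo_subset_Ioc_self
  have h3 : IntegrableOn Real.log (Set.Ioo (0:ℝ) 1) := integrable_neg_iff.mp h2
  exact h3

lemma my_integrableOn_aux (a b : ℕ) :
    IntegrableOn (fun x : ℝ => x ^ a * (1 - x) ^ b * Real.log x) (Set.Ioo (0:ℝ) 1) := by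
  apply Integrable.mono my_integrableOn_log_Ioo
  · exact (((measurable_id.pow_const a).mul
      ((measurable_const.sub measurable_id).pow_const b)).mul
      Real.measurable_log).aestronglyMeasurable
  · filter_upwards [ae_restrict_mem measurableSet_Ioo] with x hx
    have h0 : (0:ℝ) < x := hx.1
    have h1 : x < 1 := hx.2
    rw [norm_mul, norm_mul, norm_pow, norm_pow]
    have hx1 : ‖x‖ ≤ 1 := by rw [Real.norm_eq_abs, abs_of_pos h0]; exact h1.le
    have hx2 : ‖(1:ℝ) - x‖ ≤ 1 := by
      rw [Real.norm_eq_abs, abs_of_pos (by linarith)]; linarith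
    calc ‖x‖ ^ a * ‖(1:ℝ) - x‖ ^ b * ‖Real.log x‖
        ≤ 1 ^ a * 1 ^ b * ‖Real.log x‖ := by gcongr
      _ = ‖Real.log x‖ := by simp

lemma my_integral_pow_mul_log (a : ℕ) :
    ∫ x in Set.Ioo (0:ℝ) 1, x ^ a * Real.log x = -(1 / ((a:ℝ)+1)^2) := by
  have ha : ((a:ℝ)+1) ≠ 0 := by positivity
  set F : ℝ → ℝ := fun x => x^(a+1) * Real.log x / ((a:ℝ)+1) - x^(a+1) / ((a:ℝ)+1)^2 with hF
  have hfe : (fun x : ℝ => x^(a+1) * Real.log x) = fun x => x^a * (x * Real.log x) := by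
    funext x; ring
  have hcont1 : Continuous (fun x : ℝ => x ^ (a+1) * Real.log x) := by
    rw [hfe]; exact (continuous_pow a).mul Real.continuous_mul_log
  have hcont : ContinuousOn F (Set.Icc 0 1) :=
    ((hcont1.div_const _).sub ((continuous_pow (a+1)).div_const _)).continuousOn
  have hint : IntegrableOn (fun x : ℝ => x ^ a * Real.log x) (Set.Ioo (0:ℝ) 1) := by
    have := my_integrableOn_aux a 0
    simpa using this
  have hderiv : ∀ x ∈ Set.Ioo (0:ℝ) 1,
      HasDerivWithinAt F (x ^ a * Real.log x) (Set.Ioi x) x := by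
    intro x hx
    have hx0 : x ≠ 0 := ne_of_gt hx.1
    have h1 : HasDerivAt (fun x : ℝ => x^(a+1) * Real.log x)
        ((↑(a+1)) * x ^ a * Real.log x + x^(a+1) * x⁻¹) x := by
      have := (hasDerivAt_pow (a+1) x).mul (Real.hasDerivAt_log hx0)
      exact this.congr_deriv (by simp)
    have h2 := (h1.div_const ((a:ℝ)+1)).sub ((hasDerivAt_pow (a+1) x).div_const (((a:ℝ)+1)^2))
    have hxa : x^(a+1) * x⁻¹ = x^a := by
      rw [pow_succ, mul_assoc, mul_inv_cancel₀ hx0, mul_one]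
    refine (h2.congr_deriv ?_).hasDerivWithinAt
    rw [hxa]
    push_cast
    field_simp
    ring
  have key := intervalIntegral.integral_eq_sub_of_hasDeriv_right_of_le (f := F)
    (f' := fun x => x ^ a * Real.log x) zero_le_one hcont hderiv
    (by rw [intervalIntegrable_iff_integrableOn_Ioo_of_le zero_le_one]; exact hint)
  rw [intervalIntegral.integral_of_le zero_le_one, MeasureTheory.integral_Ioc_eq_integral_Ioo] at key
  rw [key, hF]
  simp [Real.log_zero, Real.log_one]

lemma my_key (b : ℕ) : ∀ a : ℕ, ∫ x in Set.Ioo (0:ℝ) 1, x ^ a * (1 - x) ^ b * Real.log x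
    = -((a.factorial : ℝ) * b.factorial / (a+b+1).factorial) *
        ((harmonic (a+b+1) : ℝ) - (harmonic a : ℝ)) := by
  induction b with
  | zero =>
    intro a
    have h := my_integral_pow_mul_log a
    have : (∫ x in Set.Ioo (0:ℝ) 1, x ^ a * (1 - x) ^ 0 * Real.log x)
        = ∫ x in Set.Ioo (0:ℝ) 1, x ^ a * Real.log x := by
      apply MeasureTheory.integral_congr_ae
      filter_upwards with x
      ring
    rw [this, h]
    have hfa : ((a.factorial : ℝ)) ≠ 0 := Nat.cast_ne_zero.mpr a.factorial_ne_zero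
    have ha : ((a:ℝ)+1) ≠ 0 := by positivity
    rw [show a + 0 + 1 = a + 1 from by omega, harmonic_succ, Nat.factorial_succ]
    push_cast
    field_simp
    ring
  | succ b ih =>
    intro a
    have hsplit : (∫ x in Set.Ioo (0:ℝ) 1, x ^ a * (1 - x) ^ (b+1) * Real.log x)
        = ∫ x in Set.Ioo (0:ℝ) 1,
            (x ^ a * (1 - x) ^ b * Real.log x - x ^ (a+1) * (1 - x) ^ b * Real.log x) := by
      apply MeasureTheory.integral_congr_ae
      filter_upwards with x
      ring
    rw [hsplit, MeasureTheory.integral_sub (my_integrableOn_aux a b) (my_integrableOn_aux (a+1) b),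
      ih a, ih (a+1)]
    rw [show a + (b+1) + 1 = (a+b+1) + 1 from by omega,
      show a + 1 + b + 1 = (a+b+1) + 1 from by omega,
      harmonic_succ (a+b+1), Nat.factorial_succ (a+b+1), Nat.factorial_succ b, Nat.factorial_succ a,
      harmonic_succ a]
    have h1 : ((a+b+1).factorial : ℝ) ≠ 0 := Nat.cast_ne_zero.mpr (a+b+1).factorial_ne_zero
    have h2 : ((a:ℝ)+1) ≠ 0 := by positivity
    have h3 : ((a:ℝ)+(b:ℝ)+1+1) ≠ 0 := by positivity
    push_cast
    field_simp
    ring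

theorem average_diagonal_entropy_integral (m n : ℕ) (hm : 2 ≤ m) (hn : 1 ≤ n) :
    -(m : ℝ) * (Real.Gamma (m * n) / (Real.Gamma n * Real.Gamma (n * (m - 1)))) *
        ∫ x in Set.Ioo (0 : ℝ) 1, x ^ n * (1 - x) ^ (n * (m - 1) - 1) * Real.log x =
      (harmonic (m * n) : ℝ) - (harmonic n : ℝ) := by
  -- abbreviations
  have hk1 : 1 ≤ n * (m - 1) := Nat.one_le_iff_ne_zero.mpr (by
    have : m - 1 ≠ 0 := by omega
    positivity)
  set k := n * (m - 1) with hk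
  have hidx : n + (k - 1) + 1 = m * n := by
    obtain ⟨q, hq⟩ : ∃ q, m = q + 1 := ⟨m - 1, by omega⟩
    have hkq : k = n * q := by rw [hk, hq]; simp
    have h2 : (q + 1) * n = n * q + n := by ring
    have h3 : m * n = (q + 1) * n := by rw [hq]
    omega
  have hint := my_key (k - 1) n
  rw [hidx] at hint
  rw [hint]
  -- rewrite the Gamma values
  have h1 : 1 ≤ m * n := by nlinarith
  have hGmn : Real.Gamma ((m:ℝ) * (n:ℝ)) = ((m * n - 1).factorial : ℝ) := by
    have e : (m:ℝ) * (n:ℝ) = ((m * n - 1 : ℕ) : ℝ) + 1 := by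
      rw [Nat.cast_sub h1]; push_cast; ring
    rw [e, Real.Gamma_nat_eq_factorial]
  have hGn : Real.Gamma ((n:ℝ)) = ((n - 1).factorial : ℝ) := by
    have e : (n:ℝ) = ((n - 1 : ℕ) : ℝ) + 1 := by
      rw [Nat.cast_sub hn]; push_cast; ring
    rw [e, Real.Gamma_nat_eq_factorial]
  have hGk : Real.Gamma ((n:ℝ) * ((m:ℝ) - 1)) = ((k - 1).factorial : ℝ) := by
    have e : (n:ℝ) * ((m:ℝ) - 1) = ((k - 1 : ℕ) : ℝ) + 1 := by
      rw [Nat.cast_sub hk1, hk, Nat.cast_mul, Nat.cast_sub (show 1 ≤ m by omega)]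
      push_cast; ring
    rw [e, Real.Gamma_nat_eq_factorial]
  rw [hGmn, hGn, hGk]
  -- factorial identities
  have f1 : ((m * n).factorial : ℝ) = (m : ℝ) * (n : ℝ) * ((m * n - 1).factorial : ℝ) := by
    rw [← Nat.mul_factorial_pred (show m * n ≠ 0 by positivity)]
    push_cast
    ring
  have f2 : ((n).factorial : ℝ) = (n : ℝ) * ((n - 1).factorial : ℝ) := by
    rw [← Nat.mul_factorial_pred (show n ≠ 0 by omega)]
    push_cast
    ring
  rw [f1, f2]
  have c1 : ((m * n - 1).factorial : ℝ) ≠ 0 := Nat.cast_ne_zero.mpr (Nat.factorial_ne_zero _)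
  have c2 : ((n - 1).factorial : ℝ) ≠ 0 := Nat.cast_ne_zero.mpr (Nat.factorial_ne_zero _)
  have c3 : ((k - 1).factorial : ℝ) ≠ 0 := Nat.cast_ne_zero.mpr (Nat.factorial_ne_zero _)
  have c4 : (m : ℝ) ≠ 0 := Nat.cast_ne_zero.mpr (by omega)
  have c5 : (n : ℝ) ≠ 0 := Nat.cast_ne_zero.mpr (by omega)
  field_simp
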